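/- Let (E,F) be a uniformly self-similar ends space and let H be a half-space of (E,F). Then Homeo(E,F) is the normal closure of the subgroup of those homeomorphisms in Homeo(E,F) that are supported on H; moreover, every element of Homeo(E,F) is a product of at most 3 elements, each of which is a conjugate in Homeo(E,F) of a homeomorphism supported on H. -/

import Mathlib

section EndsSpace

variable {E : Type*} [TopologicalSpace E]

/-- A homeomorphism of pairs from `(A, A ∩ F)` to `(B, B ∩ F)`:
a homeomorphism of the subspaces `A → B` carrying `A ∩ F` onto `B ∩ F`. -/
def PairHomeo (F A B : Set E) : Prop :=
  ∃ h : A ≃ₜ B, ∀ x : A, ((h x : E) ∈ F ↔ (x : E) ∈ F)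

/-- `(E, F)` is self-similar: every partition of `E` into finitely many pairwise
disjoint nonempty clopen sets has a piece containing a clopen set `D` with
`(D, D ∩ F)` homeomorphic (as a pair) to `(E, F)`. -/
def SelfSimilarPair (F : Set E) : Prop :=
  ∀ (n : ℕ) (P : Fin n → Set E),
    (∀ i, IsClopen (P i)) → (∀ i, (P i).Nonempty) →
    Pairwise (Function.onFun Disjoint P) → (⋃ i, P i) = Set.univ →
    ∃ i, ∃ D : Set E, IsClopen D ∧ D ⊆ P i ∧ PairHomeo F D Set.univ

/-- The preorder `x ≼ y` on ends: every clopen neighborhood `U` of `y` contains a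
clopen set `D` for which there are a clopen neighborhood `V` of `x` and a
homeomorphism of pairs `(V, V ∩ F) → (D, D ∩ F)`. -/
def EndsLE (F : Set E) (x y : E) : Prop :=
  ∀ U : Set E, IsClopen U → y ∈ U →
    ∃ D : Set E, D ⊆ U ∧ IsClopen D ∧
      ∃ V : Set E, IsClopen V ∧ x ∈ V ∧ PairHomeo F V D

/-- The equivalence `x ∼ y`: `x ≼ y` and `y ≼ x`. -/
def EndsEquiv (F : Set E) (x y : E) : Prop := EndsLE F x y ∧ EndsLE F y x

/-- `x` is a maximal end. -/
def MaximalEnd (F : Set E) (x : E) : Prop := ∀ y, EndsLE F x y → EndsLE F y x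

/-- `M(E)`, the set of maximal ends. -/
def MaxSet (F : Set E) : Set E := {x | MaximalEnd F x}

/-- `(E, F)` is uniformly self-similar: it is self-similar, `M(E)` is a single
`∼`-equivalence class, and `M(E)` is homeomorphic to the Cantor space `ℕ → Bool`. -/
def UniformlySelfSimilar (F : Set E) : Prop :=
  SelfSimilarPair F ∧
  (∃ x, MaxSet F = {y | EndsEquiv F x y}) ∧
  Nonempty (↥(MaxSet F) ≃ₜ (ℕ → Bool))

/-- The group `Homeo(E,F)` of homeomorphisms of `E` preserving `F`,
as a subgroup of the permutation group of `E`. -/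
def EndsHomeo (F : Set E) : Subgroup (Equiv.Perm E) where
  carrier := {h | Continuous h ∧ Continuous h.symm ∧ ∀ x, h x ∈ F ↔ x ∈ F}
  one_mem' := ⟨continuous_id, continuous_id, fun _ => Iff.rfl⟩
  mul_mem' := by
    rintro a b ⟨ha1, ha2, ha3⟩ ⟨hb1, hb2, hb3⟩
    refine ⟨?_, ?_, fun x => ?_⟩
    · exact ha1.comp hb1
    · exact hb2.comp ha2
    · exact (ha3 (b x)).trans (hb3 x)
  inv_mem' := by
    rintro a ⟨ha1, ha2, ha3⟩
    refine ⟨ha2, ha1, fun x => ?_⟩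
    have h := ha3 (a⁻¹ x)
    rw [show a (a⁻¹ x) = x from (Equiv.eq_symm_apply a).mp rfl] at h
    exact h.symm

/-- A half-space of `(E,F)`: a clopen set meeting `M(E)` in a nonempty proper subset. -/
def IsHalfSpace (F H : Set E) : Prop :=
  IsClopen H ∧ (H ∩ MaxSet F).Nonempty ∧ H ∩ MaxSet F ⊂ MaxSet F

/-- `φ` is an `H`-translation: the sets `φⁿ(H)`, `n ∈ ℤ`, are pairwise disjoint. -/
def IsHTranslation (H : Set E) (φ : Equiv.Perm E) : Prop :=
  ∀ m n : ℤ, m ≠ n → Disjoint ((φ ^ m) '' H) ((φ ^ n) '' H)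

/-- A homeomorphism is supported on `H` if it fixes every point outside `H`. -/
def SupportedOn (H : Set E) (h : Equiv.Perm E) : Prop := ∀ x ∉ H, h x = x

end EndsSpace

section Helpers
open Set
variable {E : Type*} [TopologicalSpace E]

theorem pairHomeo_symm {F A B : Set E} : PairHomeo F A B → PairHomeo F B A := by
  rintro ⟨e, he⟩
  refine ⟨e.symm, fun x => ?_⟩
  have h := he (e.symm x)
  rw [Homeomorph.apply_symm_apply] at h
  exact h.symm

theorem pairHomeo_trans {F A B C : Set E} :
    PairHomeo F A B → PairHomeo F B C → PairHomeo F A C := by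
  rintro ⟨e1, he1⟩ ⟨e2, he2⟩
  exact ⟨e1.trans e2, fun x => (he2 (e1 x)).trans (he1 x)⟩

theorem isClopen_val_image {D : Set E} (hD : IsClopen D) {s : Set ↥D}
    (hs : IsClopen s) : IsClopen (Subtype.val '' s) :=
  ⟨hD.isClosed.isClosedMap_subtype_val _ hs.isClosed,
   hD.isOpen.isOpenMap_subtype_val _ hs.isOpen⟩

theorem pairHomeo_restrict {F V D S : Set E} (hD : IsClopen D)
    (h : PairHomeo F V D) (hS : IsClopen S) (hSV : S ⊆ V) :
    ∃ T, T ⊆ D ∧ IsClopen T ∧ PairHomeo F S T := by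
  obtain ⟨e, he⟩ := h
  set S' : Set ↥V := Subtype.val ⁻¹' S with hS'def
  have hS'c : IsClopen S' := hS.preimage continuous_subtype_val
  set T' : Set ↥D := ⇑e.symm ⁻¹' S' with hT'def
  have hT'c : IsClopen T' := hS'c.preimage e.symm.continuous
  have hTD : Subtype.val '' T' ⊆ D := Subtype.coe_image_subset _ _
  have memT' : ∀ x : ↥S, e ⟨(x : E), hSV x.2⟩ ∈ T' := fun x => by
    show e.symm (e ⟨(x : E), hSV x.2⟩) ∈ S'
    rw [Homeomorph.symm_apply_apply]
    exact x.2
  have memB : ∀ y : ↥(Subtype.val '' T'), (⟨(y : E), hTD y.2⟩ : ↥D) ∈ T' := fun y => by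
    obtain ⟨c, hc, hcy⟩ := y.2
    have hcb : (⟨(y : E), hTD y.2⟩ : ↥D) = c := Subtype.ext hcy.symm
    rw [hcb]; exact hc
  have memS : ∀ y : ↥(Subtype.val '' T'), ((e.symm ⟨(y : E), hTD y.2⟩ : ↥V) : E) ∈ S :=
    fun y => memB y
  refine ⟨Subtype.val '' T', hTD, isClopen_val_image hD hT'c, ?_⟩
  let to1 : ↥S → ↥(Subtype.val '' T') :=
    fun x => ⟨((e ⟨(x : E), hSV x.2⟩ : ↥D) : E), ⟨_, memT' x, rfl⟩⟩
  let inv1 : ↥(Subtype.val '' T') → ↥S :=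
    fun y => ⟨((e.symm ⟨(y : E), hTD y.2⟩ : ↥V) : E), memS y⟩
  have hli : ∀ x, inv1 (to1 x) = x := by
    intro x
    apply Subtype.ext
    dsimp only [to1, inv1]
    rw [Subtype.coe_eta, Homeomorph.symm_apply_apply]
  have hri : ∀ y, to1 (inv1 y) = y := by
    intro y
    apply Subtype.ext
    dsimp only [to1, inv1]
    rw [Subtype.coe_eta, Homeomorph.apply_symm_apply]
  have hc1 : Continuous to1 :=
    (continuous_subtype_val.comp (e.continuous.comp
      (Continuous.subtype_mk continuous_subtype_val _))).subtype_mk _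
  have hc2 : Continuous inv1 :=
    (continuous_subtype_val.comp (e.symm.continuous.comp
      (Continuous.subtype_mk continuous_subtype_val _))).subtype_mk _
  exact ⟨⟨⟨to1, inv1, hli, hri⟩, hc1, hc2⟩, fun x => he ⟨(x : E), hSV x.2⟩⟩

theorem mem_endsHomeo_iff {F : Set E} {g : Equiv.Perm E} :
    g ∈ EndsHomeo F ↔ Continuous g ∧ Continuous g.symm ∧ ∀ x, g x ∈ F ↔ x ∈ F :=
  Iff.rfl

theorem isClopen_perm_image {F : Set E} {g : Equiv.Perm E} (hg : g ∈ EndsHomeo F)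
    {S : Set E} (hS : IsClopen S) : IsClopen (⇑g '' S) := by
  rw [Equiv.image_eq_preimage_symm]
  exact hS.preimage (mem_endsHomeo_iff.mp hg).2.1

theorem pairHomeo_perm_image {F : Set E} {g : Equiv.Perm E} (hg : g ∈ EndsHomeo F)
    (S : Set E) : PairHomeo F S (⇑g '' S) := by
  obtain ⟨hc, hc', hFp⟩ := mem_endsHomeo_iff.mp hg
  let G : E ≃ₜ E := ⟨(g : E ≃ E), hc, hc'⟩
  refine ⟨G.image S, fun x => ?_⟩
  exact hFp (x : E)

theorem exists_endsSwap {F S T : Set E} (hS : IsClopen S) (hT : IsClopen T)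
    (hdisj : ∀ x ∈ S, x ∉ T) (e : ↥S ≃ₜ ↥T)
    (he : ∀ x : ↥S, ((e x : E) ∈ F ↔ (x : E) ∈ F)) :
    ∃ σ : Equiv.Perm E, σ ∈ EndsHomeo F ∧
      (∀ x (hx : x ∈ S), σ x = ↑(e ⟨x, hx⟩)) ∧
      (∀ x (hx : x ∈ T), σ x = ↑(e.symm ⟨x, hx⟩)) ∧
      (∀ x, x ∉ S → x ∉ T → σ x = x) := by
  classical
  set f : E → E := fun x =>
    if hx : x ∈ S then ↑(e ⟨x, hx⟩) else if hx' : x ∈ T then ↑(e.symm ⟨x, hx'⟩) else x with hf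
  have hfS : ∀ x (hx : x ∈ S), f x = ↑(e ⟨x, hx⟩) := fun x hx => dif_pos hx
  have hfT : ∀ x (hx : x ∈ T), f x = ↑(e.symm ⟨x, hx⟩) := fun x hx => by
    have hxS : x ∉ S := fun h => hdisj x h hx
    simp only [hf, dif_neg hxS, dif_pos hx]
  have hfO : ∀ x, x ∉ S → x ∉ T → f x = x := fun x h1 h2 => by
    simp only [hf, dif_neg h1, dif_neg h2]
  have hinv : ∀ x, f (f x) = x := by
    intro x
    by_cases hx : x ∈ S
    · rw [hfS x hx, hfT _ (e ⟨x, hx⟩).2, Subtype.coe_eta, Homeomorph.symm_apply_apply]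
    · by_cases hx' : x ∈ T
      · have hmem : ((e.symm ⟨x, hx'⟩ : ↥S) : E) ∈ S := (e.symm ⟨x, hx'⟩).2
        rw [hfT x hx', hfS _ hmem, Subtype.coe_eta, Homeomorph.apply_symm_apply]
      · rw [hfO x hx hx', hfO x hx hx']
  have hcont : Continuous f := by
    rw [continuous_iff_continuousAt]
    intro x
    by_cases hx : x ∈ S
    · have hco : ContinuousOn f S := by
        rw [continuousOn_iff_continuous_restrict]
        have hres : Set.domRestrict S f = fun y : ↥S => ((e y : ↥T) : E) := by
          funext y
          rw [Set.restrict_apply, hfS (y : E) y.2, Subtype.coe_eta]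
        rw [hres]
        exact continuous_subtype_val.comp e.continuous
      exact hco.continuousAt (hS.isOpen.mem_nhds hx)
    · by_cases hx' : x ∈ T
      · have hco : ContinuousOn f T := by
          rw [continuousOn_iff_continuous_restrict]
          have hres : Set.domRestrict T f = fun y : ↥T => ((e.symm y : ↥S) : E) := by
            funext y
            rw [Set.restrict_apply, hfT (y : E) y.2, Subtype.coe_eta]
          rw [hres]
          exact continuous_subtype_val.comp e.symm.continuous
        exact hco.continuousAt (hT.isOpen.mem_nhds hx')
      · have hopen : IsOpen (S ∪ T)ᶜ := (hS.isClosed.union hT.isClosed).isOpen_compl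
        have hco : ContinuousOn f (S ∪ T)ᶜ := by
          rw [continuousOn_iff_continuous_restrict]
          have hres : Set.domRestrict (S ∪ T)ᶜ f = fun y : ↥(S ∪ T)ᶜ => (y : E) := by
            funext y
            have hy := y.2
            rw [Set.mem_compl_iff, Set.mem_union] at hy
            push_neg at hy
            rw [Set.restrict_apply, hfO (y : E) hy.1 hy.2]
          rw [hres]
          exact continuous_subtype_val
        exact hco.continuousAt (hopen.mem_nhds (by
          rw [Set.mem_compl_iff, Set.mem_union]
          push_neg
          exact ⟨hx, hx'⟩))
  have hFpres : ∀ x, f x ∈ F ↔ x ∈ F := by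
    intro x
    by_cases hx : x ∈ S
    · rw [hfS x hx]; exact he ⟨x, hx⟩
    · by_cases hx' : x ∈ T
      · rw [hfT x hx']
        have h2 := he (e.symm ⟨x, hx'⟩)
        rw [Homeomorph.apply_symm_apply] at h2
        exact h2.symm
      · rw [hfO x hx hx']
  exact ⟨⟨f, f, hinv, hinv⟩, ⟨hcont, hcont, hFpres⟩, hfS, hfT, hfO⟩

/-- A good end: every clopen neighborhood contains a clopen copy of `(E,F)`. -/
def GoodEnd (F : Set E) (x : E) : Prop :=
  ∀ U : Set E, IsClopen U → x ∈ U → ∃ D : Set E, IsClopen D ∧ D ⊆ U ∧ PairHomeo F D Set.univ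

theorem exists_goodEnd [Nonempty E] [CompactSpace E] {F : Set E}
    (hss : SelfSimilarPair F) : ∃ x, GoodEnd F x := by
  classical
  by_contra hno
  push_neg at hno
  have hbad : ∀ x : E, ∃ U : Set E, IsClopen U ∧ x ∈ U ∧
      ¬∃ D : Set E, IsClopen D ∧ D ⊆ U ∧ PairHomeo F D Set.univ := by
    intro x
    by_contra h
    push_neg at h
    exact hno x (fun U hU hxU => h U hU hxU)
  choose U hUc hUx hUbad using hbad
  obtain ⟨t, ht⟩ := IsCompact.elim_finite_subcover (isCompact_univ (X := E)) U
    (fun x => (hUc x).isOpen) (fun x _ => Set.mem_iUnion.2 ⟨x, hUx x⟩)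
  set l : List E := t.toList with hl
  set n := l.length with hn
  set V : Fin n → Set E := fun i =>
    U (l.get i) \ ⋃ (j : Fin n) (_ : j < i), U (l.get j) with hV
  have hVc : ∀ i, IsClopen (V i) := by
    intro i
    refine IsClopen.diff (hUc _) (isClopen_iUnion_of_finite fun j => ?_)
    by_cases h : j < i
    · simpa [h] using hUc (l.get j)
    · haveI : IsEmpty (j < i) := ⟨h⟩
      rw [Set.iUnion_of_empty]
      exact isClopen_empty
  have hVsub : ∀ i, V i ⊆ U (l.get i) := fun i => Set.diff_subset
  have hcov : ∀ x : E, ∃ i : Fin n, x ∈ U (l.get i) := by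
    intro x
    have hx := ht (Set.mem_univ x)
    rw [Set.mem_iUnion₂] at hx
    obtain ⟨y, hyt, hxy⟩ := hx
    have hyl : y ∈ l := by rw [hl]; exact Finset.mem_toList.2 hyt
    obtain ⟨i, hi⟩ := List.mem_iff_get.mp hyl
    exact ⟨i, by rw [hi]; exact hxy⟩
  have hpart : ∀ x : E, ∃ i : Fin n, x ∈ V i := by
    intro x
    obtain ⟨i, hi⟩ := hcov x
    have hex : ∃ m : ℕ, ∃ hm : m < n, x ∈ U (l.get ⟨m, hm⟩) := ⟨i.1, i.2, hi⟩
    let m₀ := Nat.find hex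
    obtain ⟨hm₀, hxm₀⟩ := Nat.find_spec hex
    refine ⟨⟨m₀, hm₀⟩, hxm₀, ?_⟩
    intro hcon
    rw [Set.mem_iUnion₂] at hcon
    obtain ⟨j, hj, hxj⟩ := hcon
    exact Nat.find_min hex (by exact_mod_cast hj) ⟨j.2, by simpa using hxj⟩
  have hdisj : ∀ i j : Fin n, i ≠ j → Disjoint (V i) (V j) := by
    have key : ∀ i j : Fin n, j < i → Disjoint (V i) (V j) := by
      intro i j hji
      rw [Set.disjoint_left]
      intro x hxi hxj
      have : x ∈ ⋃ (k : Fin n) (_ : k < i), U (l.get k) :=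
        Set.mem_iUnion₂.2 ⟨j, hji, hVsub j hxj⟩
      exact hxi.2 this
    intro i j hij
    rcases lt_or_gt_of_ne hij with h | h
    · exact (key j i h).symm
    · exact key i j h
  -- filter out empty pieces
  set idx : List (Fin n) := (List.finRange n).filter (fun i => decide (V i).Nonempty) with hidx
  set m := idx.length with hm
  set P : Fin m → Set E := fun k => V (idx.get k) with hP
  have hidxnd : idx.Nodup := (List.nodup_finRange n).filter _
  have hgetinj : Function.Injective idx.get := List.nodup_iff_injective_get.mp hidxnd
  have hPne : ∀ k : Fin m, (P k).Nonempty := by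
    intro k
    have hk : idx.get k ∈ idx := List.get_mem idx k
    exact of_decide_eq_true (List.mem_filter.mp hk).2
  have hPuniv : (⋃ k, P k) = Set.univ := by
    apply Set.eq_univ_of_forall
    intro x
    obtain ⟨i, hi⟩ := hpart x
    have himem : i ∈ idx := by
      rw [hidx]
      exact List.mem_filter.2 ⟨List.mem_finRange i, decide_eq_true ⟨x, hi⟩⟩
    obtain ⟨k, hk⟩ := List.mem_iff_get.mp himem
    exact Set.mem_iUnion.2 ⟨k, show x ∈ V (idx.get k) by rw [hk]; exact hi⟩
  have hPdisj : Pairwise (Function.onFun Disjoint P) := by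
    intro a b hab
    exact hdisj _ _ (fun h => hab (hgetinj h))
  obtain ⟨i, D, hDc, hDP, hDpair⟩ := hss m P (fun k => hVc _) hPne hPdisj hPuniv
  exact hUbad (l.get (idx.get i)) ⟨D, hDc, hDP.trans (hVsub _), hDpair⟩

theorem goodEnd_of_le {F : Set E} {x y : E} (hx : GoodEnd F x) (hxy : EndsLE F x y) :
    GoodEnd F y := by
  intro U hU hyU
  obtain ⟨D, hDU, hDc, V, hVc, hxV, hVD⟩ := hxy U hU hyU
  obtain ⟨C, hCc, hCV, hCpair⟩ := hx V hVc hxV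
  obtain ⟨T, hTD, hTc, hTpair⟩ := pairHomeo_restrict hDc hVD hCc hCV
  exact ⟨T, hTc, hTD.trans hDU, pairHomeo_trans (pairHomeo_symm hTpair) hCpair⟩

theorem goodEnd_le_all {F : Set E} {x : E} (hx : GoodEnd F x) (y : E) : EndsLE F y x := by
  intro U hU hxU
  obtain ⟨D, hDc, hDU, hDp⟩ := hx U hU hxU
  exact ⟨D, hDU, hDc, Set.univ, isClopen_univ, Set.mem_univ y, pairHomeo_symm hDp⟩

theorem goodEnd_maximal {F : Set E} {x : E} (hx : GoodEnd F x) : MaximalEnd F x :=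
  fun y _ => goodEnd_le_all hx y

theorem goodEnd_of_maximal [Nonempty E] [CompactSpace E] {F : Set E}
    (hss : SelfSimilarPair F) (hclass : ∃ x₀, MaxSet F = {y | EndsEquiv F x₀ y})
    {m : E} (hm : m ∈ MaxSet F) : GoodEnd F m := by
  obtain ⟨x₀, hx₀⟩ := hclass
  obtain ⟨xs, hxs⟩ := exists_goodEnd hss
  have hxsM : xs ∈ MaxSet F := goodEnd_maximal hxs
  rw [hx₀] at hxsM hm
  exact goodEnd_of_le (goodEnd_of_le hxs hxsM.2) hm.1

theorem cantor_open_infinite {O : Set (ℕ → Bool)} (hO : IsOpen O) (hne : O.Nonempty) :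
    O.Infinite := by
  obtain ⟨f, hf⟩ := hne
  obtain ⟨I, u, hu, hsub⟩ := isOpen_pi_iff.mp hO f hf
  set N := (I.sup id) + 1 with hN
  have key : ∀ n : ℕ, (fun m => if m = N + n then !(f m) else f m) ∈ O := by
    intro n
    apply hsub
    rw [Set.mem_pi]
    intro i hi
    have hiN : i < N := by
      have : id i ≤ I.sup id := Finset.le_sup hi
      simp only [id] at this
      omega
    simp only [if_neg (by omega : ¬ i = N + n)]
    exact (hu i hi).2
  refine Set.infinite_of_injective_forall_mem
    (f := fun n : ℕ => (fun m => if m = N + n then !(f m) else f m)) ?_ key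
  intro a b hab
  by_contra hne'
  have hfa := congrFun hab (N + a)
  simp only [if_pos rfl, if_neg (by omega : ¬ N + a = N + b)] at hfa
  exact (Bool.not_ne_self _) hfa

theorem maxSet_inter_infinite {F O : Set E}
    (hcant : Nonempty (↥(MaxSet F) ≃ₜ (ℕ → Bool)))
    (hO : IsOpen O) (hne : (O ∩ MaxSet F).Nonempty) : (O ∩ MaxSet F).Infinite := by
  obtain ⟨e⟩ := hcant
  set S : Set ↥(MaxSet F) := Subtype.val ⁻¹' O with hSdef
  have hSo : IsOpen S := hO.preimage continuous_subtype_val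
  have hSne : S.Nonempty := by
    obtain ⟨x, hxO, hxM⟩ := hne
    exact ⟨⟨x, hxM⟩, hxO⟩
  have himg : ⇑e '' S = ⇑e.symm ⁻¹' S := by
    apply Set.ext
    intro y
    constructor
    · rintro ⟨s, hs, rfl⟩
      simpa using hs
    · intro hy
      exact ⟨e.symm y, hy, by simp⟩
  have h1 : IsOpen (⇑e.symm ⁻¹' S) := hSo.preimage e.symm.continuous
  have h2 : (⇑e.symm ⁻¹' S).Nonempty := by
    obtain ⟨s, hs⟩ := hSne
    exact ⟨e s, by simpa using hs⟩
  have h3 := cantor_open_infinite h1 h2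
  rw [← himg] at h3
  have h4 : S.Infinite := Set.Infinite.of_image _ h3
  have h5 := h4.image (Set.injOn_of_injective Subtype.val_injective)
  have h6 : Subtype.val '' S = O ∩ MaxSet F := by
    rw [hSdef, Subtype.image_preimage_coe]
    exact Set.inter_comm _ _
  rwa [h6] at h5

end Helpers

variable {E : Type*} [TopologicalSpace E] [Nonempty E] [CompactSpace E]
  [TopologicalSpace.MetrizableSpace E] [TotallyDisconnectedSpace E]

theorem endsHomeo_normal_closure_of_halfspace_supported
    (F : Set E) (hF : IsClosed F) (huss : UniformlySelfSimilar F)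
    (H : Set E) (hH : IsHalfSpace F H) :
    Subgroup.normalClosure {h : ↥(EndsHomeo F) | SupportedOn H (h : Equiv.Perm E)} = ⊤ ∧
    ∀ g : ↥(EndsHomeo F), ∃ l : List ↥(EndsHomeo F), l.length ≤ 3 ∧
      (∀ c ∈ l, ∃ k a : ↥(EndsHomeo F), SupportedOn H (k : Equiv.Perm E) ∧ c = a * k * a⁻¹) ∧
      l.prod = g := by
  classical
  obtain ⟨hss, hclass, hcant⟩ := huss
  obtain ⟨hHc, hHne, hHss⟩ := hH
  have main : ∀ g : ↥(EndsHomeo F), ∃ l : List ↥(EndsHomeo F), l.length ≤ 3 ∧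
      (∀ c ∈ l, ∃ k a : ↥(EndsHomeo F), SupportedOn H (k : Equiv.Perm E) ∧ c = a * k * a⁻¹) ∧
      l.prod = g := by
    intro g
    set gp : Equiv.Perm E := (g : Equiv.Perm E) with hgp
    have hgmem : gp ∈ EndsHomeo F := g.2
    obtain ⟨hgc, hgc', hgF⟩ := mem_endsHomeo_iff.mp hgmem
    -- choose maximal points q, r1, r2 in H
    have hinf : (H ∩ MaxSet F).Infinite := maxSet_inter_infinite hcant hHc.isOpen hHne
    obtain ⟨q, hqH, hqM⟩ := hHne
    obtain ⟨r1, hr1⟩ := (hinf.diff ((Set.finite_singleton (gp q)).insert q)).nonempty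
    obtain ⟨r2, hr2⟩ :=
      (hinf.diff (((Set.finite_singleton r1).insert (gp q)).insert q)).nonempty
    have hr1H : r1 ∈ H := hr1.1.1
    have hr1M : r1 ∈ MaxSet F := hr1.1.2
    have hr2H : r2 ∈ H := hr2.1.1
    have hr2M : r2 ∈ MaxSet F := hr2.1.2
    have hr1q : r1 ≠ q := fun h => hr1.2 (by rw [h]; exact Set.mem_insert _ _)
    have hr1gq : r1 ≠ gp q := fun h => hr1.2 (by rw [h]; exact Set.mem_insert_of_mem _ rfl)
    have hr2q : r2 ≠ q := fun h => hr2.2 (by rw [h]; exact Set.mem_insert _ _)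
    have hr2gq : r2 ≠ gp q := fun h => hr2.2
      (by rw [h]; exact Set.mem_insert_of_mem _ (Set.mem_insert _ _))
    have hr2r1 : r2 ≠ r1 := fun h => hr2.2
      (by rw [h]; exact Set.mem_insert_of_mem _ (Set.mem_insert_of_mem _ rfl))
    have hqgood : GoodEnd F q := goodEnd_of_maximal hss hclass hqM
    have hr1good : GoodEnd F r1 := goodEnd_of_maximal hss hclass hr1M
    have hr2good : GoodEnd F r2 := goodEnd_of_maximal hss hclass hr2M
    -- choose clopen P1 around r1
    have hfin1 : ({q, gp q, r2} : Set E).Finite := Set.toFinite _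
    have hopen1 : IsOpen (H \ {q, gp q, r2}) := hHc.isOpen.sdiff hfin1.isClosed
    have hr1mem : r1 ∈ H \ {q, gp q, r2} := by
      refine ⟨hr1H, ?_⟩
      simp only [Set.mem_insert_iff, Set.mem_singleton_iff]
      push_neg
      exact ⟨hr1q, hr1gq, fun h => hr2r1 h.symm⟩
    obtain ⟨P1, hP1c, hr1P1, hP1sub⟩ := compact_exists_isClopen_in_isOpen hopen1 hr1mem
    -- choose clopen P2 around r2
    have hfin2 : ({q, gp q} : Set E).Finite := Set.toFinite _
    have hopen2 : IsOpen (H \ ({q, gp q} ∪ P1)) :=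
      hHc.isOpen.sdiff (hfin2.isClosed.union hP1c.isClosed)
    have hr2mem : r2 ∈ H \ ({q, gp q} ∪ P1) := by
      refine ⟨hr2H, ?_⟩
      intro hcon
      rcases hcon with h | h
      · rcases h with h | h
        · exact hr2q h
        · exact hr2gq h
      · exact (hP1sub h).2 (by simp)
    obtain ⟨P2, hP2c, hr2P2, hP2sub⟩ := compact_exists_isClopen_in_isOpen hopen2 hr2mem
    have hP1H : P1 ⊆ H := fun x hx => (hP1sub hx).1
    have hP2H : P2 ⊆ H := fun x hx => (hP2sub hx).1
    have hP12 : ∀ x ∈ P2, x ∉ P1 := fun x hx h1 =>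
      (hP2sub hx).2 (Set.mem_union_right _ h1)
    -- the clopen set W around q
    set W : Set E := (H \ (P1 ∪ P2)) ∩ ⇑gp ⁻¹' (P1 ∪ P2)ᶜ with hWdef
    have hWc : IsClopen W := ((hHc.diff (hP1c.union hP2c)).inter
      (((hP1c.union hP2c).compl).preimage hgc))
    have hqW : q ∈ W := by
      refine ⟨⟨hqH, ?_⟩, ?_⟩
      · intro h
        rcases h with h | h
        · exact (hP1sub h).2 (Set.mem_insert _ _)
        · exact (hP2sub h).2 (Set.mem_union_left _ (Set.mem_insert _ _))
      · intro h
        rcases h with h | h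
        · exact (hP1sub h).2 (Set.mem_insert_of_mem _ (Set.mem_insert _ _))
        · exact (hP2sub h).2 (Set.mem_union_left _ (Set.mem_insert_of_mem _ rfl))
    have hWH : W ⊆ H := fun x hx => hx.1.1
    have hWP1 : ∀ x ∈ W, x ∉ P1 := fun x hx h => hx.1.2 (Set.mem_union_left _ h)
    have hWP2 : ∀ x ∈ W, x ∉ P2 := fun x hx h => hx.1.2 (Set.mem_union_right _ h)
    have hgWP : ∀ x ∈ W, gp x ∉ P1 ∪ P2 := fun x hx => hx.2
    -- copies of (E,F)
    obtain ⟨CW, hCWc, hCWsub, hCWpair⟩ := hqgood W hWc hqW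
    obtain ⟨C1, hC1c, hC1sub, hC1pair⟩ := hr1good P1 hP1c hr1P1
    obtain ⟨C2, hC2c, hC2sub, hC2pair⟩ := hr2good P2 hP2c hr2P2
    -- X : copy of W inside C1
    obtain ⟨X, hXC1, hXc, hWX⟩ :=
      pairHomeo_restrict hC1c (pairHomeo_symm hC1pair) hWc (Set.subset_univ W)
    -- T : copy of Hᶜ inside C2
    obtain ⟨T, hTC2, hTc, hHT⟩ :=
      pairHomeo_restrict hC2c (pairHomeo_symm hC2pair) hHc.compl (Set.subset_univ _)
    -- T4 : copy of Hᶜ inside CW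
    obtain ⟨T4, hT4CW, hT4c, hHT4⟩ :=
      pairHomeo_restrict hCWc (pairHomeo_symm hCWpair) hHc.compl (Set.subset_univ _)
    -- the global homeomorphism G induced by g, and gW = g(W)
    let G : E ≃ₜ E := ⟨(gp : E ≃ E), hgc, hgc'⟩
    set gW : Set E := ⇑G '' W with hgWdef
    have hgWc : IsClopen gW := isClopen_perm_image hgmem hWc
    have hgWP1 : ∀ x ∈ gW, x ∉ P1 := by
      rintro x ⟨w, hw, rfl⟩ h
      exact hgWP w hw (Set.mem_union_left _ h)
    have hgWP2 : ∀ x ∈ gW, x ∉ P2 := by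
      rintro x ⟨w, hw, rfl⟩ h
      exact hgWP w hw (Set.mem_union_right _ h)
    -- explicit homeomorphisms
    obtain ⟨e1, he1⟩ := hWX
    obtain ⟨eT, heT⟩ := hHT
    obtain ⟨eT4, heT4⟩ := hHT4
    have he1symm : ∀ y : ↥X, ((e1.symm y : E) ∈ F ↔ (y : E) ∈ F) := by
      intro y
      have h := he1 (e1.symm y)
      rw [Homeomorph.apply_symm_apply] at h
      exact h.symm
    let eG : ↥W ≃ₜ ↥gW := G.image W
    have heGval : ∀ x : ↥W, (eG x : E) = gp (x : E) := fun x => rfl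
    let e5 : ↥X ≃ₜ ↥gW := e1.symm.trans eG
    have he5val : ∀ x : ↥X, (e5 x : E) = gp ((e1.symm x : ↥W) : E) := fun x => heGval _
    have he5 : ∀ x : ↥X, ((e5 x : E) ∈ F ↔ (x : E) ∈ F) := by
      intro x
      rw [he5val x]
      exact (hgF _).trans (he1symm x)
    -- the swaps
    obtain ⟨s1p, hs1mem, hs1S, hs1T, hs1O⟩ := exists_endsSwap hWc hXc
      (fun x hx hx' => hWP1 x hx (hC1sub (hXC1 hx'))) e1 he1
    obtain ⟨s2p, hs2mem, hs2S, hs2T, hs2O⟩ := exists_endsSwap hXc hgWc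
      (fun x hx hx' => hgWP1 x hx' (hC1sub (hXC1 hx))) e5 he5
    obtain ⟨σp, hσmem, hσS, hσT, hσO⟩ := exists_endsSwap hHc.compl hTc
      (fun x hx hx' => hx (hP2H (hC2sub (hTC2 hx')))) eT heT
    obtain ⟨σ2p, hσ2mem, hσ2S, hσ2T, hσ2O⟩ := exists_endsSwap hHc.compl hT4c
      (fun x hx hx' => hx (hWH (hCWsub (hT4CW hx')))) eT4 heT4
    let s1 : ↥(EndsHomeo F) := ⟨s1p, hs1mem⟩
    let s2 : ↥(EndsHomeo F) := ⟨s2p, hs2mem⟩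
    let σ : ↥(EndsHomeo F) := ⟨σp, hσmem⟩
    let σ2 : ↥(EndsHomeo F) := ⟨σ2p, hσ2mem⟩
    let c1 : ↥(EndsHomeo F) := s2 * s1
    let g' : ↥(EndsHomeo F) := c1⁻¹ * g
    -- c1 agrees with g on W
    have hc1W : ∀ w (hw : w ∈ W), (c1 : Equiv.Perm E) w = gp w := by
      intro w hw
      have h1 : (c1 : Equiv.Perm E) w = s2p (s1p w) := rfl
      rw [h1, hs1S w hw]
      have hmemX : (↑(e1 ⟨w, hw⟩) : E) ∈ X := (e1 ⟨w, hw⟩).2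
      rw [hs2S _ hmemX]
      rw [show (⟨(↑(e1 ⟨w, hw⟩) : E), hmemX⟩ : ↥X) = e1 ⟨w, hw⟩ from Subtype.coe_eta _ _]
      rw [he5val]
      rw [Homeomorph.symm_apply_apply]
    -- c1 fixes P2 pointwise
    have hc1P2 : ∀ z ∈ P2, (c1 : Equiv.Perm E) z = z := by
      intro z hz
      have h1 : (c1 : Equiv.Perm E) z = s2p (s1p z) := rfl
      have hzW : z ∉ W := fun h => hWP2 z h hz
      have hzX : z ∉ X := fun h => hP12 z hz (hC1sub (hXC1 h))
      have hzgW : z ∉ gW := fun h => hgWP2 z h hz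
      rw [h1, hs1O z hzW hzX, hs2O z hzX hzgW]
    -- g' fixes W pointwise
    have hg'W : ∀ w ∈ W, (g' : Equiv.Perm E) w = w := by
      intro w hw
      have h1 : (g' : Equiv.Perm E) w = (c1 : Equiv.Perm E)⁻¹ (gp w) := rfl
      rw [h1, ← hc1W w hw]
      exact Equiv.symm_apply_apply _ _
    -- k2 := σ2⁻¹ g' σ2 is supported on H
    have hk2 : SupportedOn H ((σ2⁻¹ * g' * σ2 : ↥(EndsHomeo F)) : Equiv.Perm E) := by
      intro x hx
      have h1 : ((σ2⁻¹ * g' * σ2 : ↥(EndsHomeo F)) : Equiv.Perm E) x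
          = (σ2p : Equiv.Perm E)⁻¹ ((g' : Equiv.Perm E) (σ2p x)) := rfl
      rw [h1, hσ2S x hx]
      have hmem : (↑(eT4 ⟨x, hx⟩) : E) ∈ W := hCWsub (hT4CW (eT4 ⟨x, hx⟩).2)
      rw [hg'W _ hmem, ← hσ2S x hx]
      exact Equiv.symm_apply_apply _ _
    -- k1 := σ⁻¹ c1 σ is supported on H
    have hk1 : SupportedOn H ((σ⁻¹ * c1 * σ : ↥(EndsHomeo F)) : Equiv.Perm E) := by
      intro x hx
      have h1 : ((σ⁻¹ * c1 * σ : ↥(EndsHomeo F)) : Equiv.Perm E) x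
          = (σp : Equiv.Perm E)⁻¹ ((c1 : Equiv.Perm E) (σp x)) := rfl
      rw [h1, hσS x hx]
      have hmem : (↑(eT ⟨x, hx⟩) : E) ∈ P2 := hC2sub (hTC2 (eT ⟨x, hx⟩).2)
      rw [hc1P2 _ hmem, ← hσS x hx]
      exact Equiv.symm_apply_apply _ _
    refine ⟨[c1, g'], by norm_num, ?_, ?_⟩
    · intro c hc
      rcases List.mem_cons.mp hc with rfl | hc
      · exact ⟨σ⁻¹ * c1 * σ, σ, hk1, by group⟩
      · rw [List.mem_singleton] at hc
        subst hc
        exact ⟨σ2⁻¹ * g' * σ2, σ2, hk2, by group⟩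
    · have hpr : ([c1, g'] : List ↥(EndsHomeo F)).prod = c1 * g' := by simp
      rw [hpr]
      show c1 * (c1⁻¹ * g) = g
      group
  refine ⟨?_, main⟩
  rw [Subgroup.eq_top_iff']
  intro g
  obtain ⟨l, _, hc, hprod⟩ := main g
  rw [← hprod]
  refine Subgroup.list_prod_mem _ ?_
  intro c hcl
  obtain ⟨k, a, hk, rfl⟩ := hc c hcl
  have hkmem : k ∈ Subgroup.normalClosure
      {h : ↥(EndsHomeo F) | SupportedOn H (h : Equiv.Perm E)} :=
    Subgroup.subset_normalClosure
      (show k ∈ {h : ↥(EndsHomeo F) | SupportedOn H (h : Equiv.Perm E)} from hk)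
  exact Subgroup.Normal.conj_mem Subgroup.normalClosure_normal k hkmem a
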